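/- Let u, v : ℝⁿ → ℝ ∪ {+∞} be lower semicontinuous convex functions, not identically +∞, such that u ∧ v is convex. If u ∨ v ≥ 0 on ℝⁿ, then u ≥ 0 on ℝⁿ or v ≥ 0 on ℝⁿ. -/

import Mathlib

open Filter Topology MeasureTheory
open scoped RealInnerProductSpace ENNReal Classical

noncomputable section

/-- Euclidean space ℝⁿ. -/
abbrev En (n : ℕ) := EuclideanSpace ℝ (Fin n)

/-- Convexity of an `EReal`-valued function, via convexity of its epigraph. -/
def ConvexFn {n : ℕ} (u : En n → EReal) : Prop :=
  Convex ℝ {p : En n × ℝ | u p.1 ≤ (p.2 : EReal)}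

/-- The subdifferential of `u` at `x`. -/
def subdiff {n : ℕ} (u : En n → EReal) (x : En n) : Set (En n) :=
  {y | ∀ z, u x + (⟪z - x, y⟫ : EReal) ≤ u z}

/-- The convex (Legendre–Fenchel) conjugate of `u`. -/
def conj {n : ℕ} (u : En n → EReal) (y : En n) : EReal :=
  ⨆ x, ((⟪x, y⟫ : EReal) - u x)

/-- Graph of the subdifferential map. -/
def sgraph {n : ℕ} (u : En n → EReal) : Set (En n × En n) :=
  {p | p.2 ∈ subdiff u p.1}

/-- Parallel set `P_s(u, η)`. -/
def parallelSet {n : ℕ} (u : En n → EReal) (η : Set (En n × En n)) (s : ℝ) : Set (En n) :=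
  {z | ∃ p ∈ η, p.2 ∈ subdiff u p.1 ∧ z = p.1 + s • p.2}

/-- Convex indicator function of a set. -/
def indFn {n : ℕ} (K : Set (En n)) (x : En n) : EReal :=
  if x ∈ K then 0 else ⊤

/-- Lipschitz regularization (Pasch–Hausdorff envelope) `reg_r u = (u* + I_{B_{1/r}})*`. -/
def regLip {n : ℕ} (u : En n → EReal) (r : ℝ) : En n → EReal :=
  conj (fun y => conj u y + indFn (Metric.closedBall (0 : En n) (1 / r)) y)

lemma exists_real_bound {e : EReal} (he : e < 0) : ∃ r : ℝ, r < 0 ∧ e ≤ (r : EReal) := by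
  obtain ⟨c, h1, h2⟩ := exists_between he
  lift c to ℝ using ⟨h2.ne_top, h1.ne_bot⟩
  exact ⟨c, by exact_mod_cast h2, h1.le⟩

lemma combo {n : ℕ} {w : En n → EReal} (hw : ConvexFn w) {p q : En n} {r s t : ℝ}
    (hp : w p ≤ (r : EReal)) (hq : w q ≤ (s : EReal)) (ht0 : 0 ≤ t) (ht1 : t ≤ 1) :
    w ((1 - t) • p + t • q) ≤ (((1 - t) * r + t * s : ℝ) : EReal) := by
  have h := hw (show (p, r) ∈ _ from hp) (show (q, s) ∈ _ from hq)
    (by linarith : (0:ℝ) ≤ 1 - t) ht0 (by ring)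
  simpa [Prod.smul_def, smul_eq_mul] using h

theorem sup_nonneg_of_min_convex (n : ℕ) (u v : En n → EReal)
    (hu : ConvexFn u) (hv : ConvexFn v)
    (hul : LowerSemicontinuous u) (hvl : LowerSemicontinuous v)
    (hup : ∃ x, u x ≠ ⊤) (hvp : ∃ x, v x ≠ ⊤)
    (hmin : ConvexFn (fun x => u x ⊓ v x))
    (hnn : ∀ x, (0 : EReal) ≤ u x ⊔ v x) :
    (∀ x, (0 : EReal) ≤ u x) ∨ (∀ x, (0 : EReal) ≤ v x) := by
  by_contra hcon
  push_neg at hcon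
  obtain ⟨⟨a, ha⟩, b, hb⟩ := hcon
  obtain ⟨ra, hra0, hara⟩ := exists_real_bound ha
  obtain ⟨rb, hrb0, hbrb⟩ := exists_real_bound hb
  set X : ℝ → En n := fun t => (1 - t) • a + t • b with hXdef
  have hX0 : X 0 = a := by simp [hXdef]
  have hX1 : X 1 = b := by simp [hXdef]
  have contX : Continuous X := by
    apply Continuous.add
    · exact (continuous_const.sub continuous_id).smul continuous_const
    · exact continuous_id.smul continuous_const
  set m : ℝ → ℝ := fun t => (1 - t) * ra + t * rb with hmdef
  have contm : Continuous m := by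
    apply Continuous.add
    · exact (continuous_const.sub continuous_id).mul continuous_const
    · exact continuous_id.mul continuous_const
  have hmneg : ∀ t, 0 ≤ t → t ≤ 1 → m t < 0 := by
    intro t ht0 ht1
    have h1 : (1 - t) * ra ≤ 0 := mul_nonpos_of_nonneg_of_nonpos (by linarith) hra0.le
    have h2 : t * rb ≤ 0 := mul_nonpos_of_nonneg_of_nonpos ht0 hrb0.le
    rcases lt_or_ge t 1 with h | h
    · have : (1 - t) * ra < 0 := mul_neg_of_pos_of_neg (by linarith) hra0
      simp only [hmdef]; linarith
    · have ht : t = 1 := le_antisymm ht1 h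
      simp [hmdef, ht, hrb0]
  -- F0: min bound along the segment
  have F0 : ∀ t, 0 ≤ t → t ≤ 1 → (u (X t) ⊓ v (X t)) ≤ ((m t : ℝ) : EReal) := by
    intro t ht0 ht1
    have hp : (fun x => u x ⊓ v x) a ≤ (ra : EReal) := le_trans inf_le_left hara
    have hq : (fun x => u x ⊓ v x) b ≤ (rb : EReal) := le_trans inf_le_right hbrb
    exact combo hmin hp hq ht0 ht1
  -- F1
  have F1 : ∀ t, 0 ≤ t → t ≤ 1 → u (X t) < 0 ∨ v (X t) < 0 := by
    intro t ht0 ht1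
    have h := lt_of_le_of_lt (F0 t ht0 ht1)
      (by exact_mod_cast hmneg t ht0 ht1 : ((m t : ℝ) : EReal) < 0)
    exact inf_lt_iff.mp h
  -- F2
  have F2u : ∀ z, u z < 0 → (0 : EReal) ≤ v z := by
    intro z hz
    by_contra h
    rw [not_le] at h
    exact absurd (hnn z) (not_le.mpr (sup_lt_iff.mpr ⟨hz, h⟩))
  have F2v : ∀ z, v z < 0 → (0 : EReal) ≤ u z := by
    intro z hz
    by_contra h
    rw [not_le] at h
    exact absurd (hnn z) (not_le.mpr (sup_lt_iff.mpr ⟨h, hz⟩))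
  -- the set S and c = sSup S
  set S : Set ℝ := {t | t ∈ Set.Icc (0:ℝ) 1 ∧ u (X t) < 0} with hSdef
  have h0S : (0:ℝ) ∈ S := ⟨⟨le_refl _, zero_le_one⟩, by rwa [hX0]⟩
  have hSne : S.Nonempty := ⟨0, h0S⟩
  have hSbdd : BddAbove S := ⟨1, fun t ht => ht.1.2⟩
  set c : ℝ := sSup S with hcdef
  have hc0 : 0 ≤ c := le_csSup hSbdd h0S
  have hc1 : c ≤ 1 := csSup_le hSne (fun t ht => ht.1.2)
  -- affinity of X
  have Xaff : ∀ (l s1 s2 : ℝ), X ((1 - l) * s1 + l * s2) = (1 - l) • X s1 + l • X s2 := by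
    intro l s1 s2
    simp only [hXdef]
    match_scalars <;> ring
  -- F3: u < 0 strictly left of c
  have F3 : ∀ t, 0 ≤ t → t < c → u (X t) < 0 := by
    intro t ht0 htc
    obtain ⟨t2, ht2S, htt2⟩ := exists_lt_of_lt_csSup hSne htc
    have ht2pos : 0 < t2 := lt_of_le_of_lt ht0 htt2
    obtain ⟨r1, hr10, har1⟩ := exists_real_bound (show u (X 0) < 0 by rwa [hX0])
    obtain ⟨r2, hr20, har2⟩ := exists_real_bound ht2S.2
    set l : ℝ := t / t2 with hldef
    have hl0 : 0 ≤ l := div_nonneg ht0 ht2pos.le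
    have hl1 : l ≤ 1 := by
      rw [hldef, div_le_one ht2pos]; exact htt2.le
    have hteq : t = (1 - l) * 0 + l * t2 := by
      rw [hldef]; field_simp; ring
    have hkey := combo hu har1 har2 hl0 hl1
    rw [← Xaff] at hkey
    rw [← hteq] at hkey
    have hneg : (1 - l) * r1 + l * r2 < 0 := by
      have h1 : (1 - l) * r1 ≤ 0 := mul_nonpos_of_nonneg_of_nonpos (by linarith) hr10.le
      have h2 : l * r2 ≤ 0 := mul_nonpos_of_nonneg_of_nonpos hl0 hr20.le
      rcases lt_or_ge l 1 with h | h
      · have : (1 - l) * r1 < 0 := mul_neg_of_pos_of_neg (by linarith) hr10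
        linarith
      · have : l = 1 := le_antisymm hl1 h
        rw [this]; simpa using hr20
    calc u (X t) ≤ _ := hkey
      _ < 0 := by exact_mod_cast hneg
  -- F4: u ≥ 0 strictly right of c
  have F4 : ∀ t, c < t → t ≤ 1 → (0 : EReal) ≤ u (X t) := by
    intro t hct ht1
    by_contra h
    rw [not_le] at h
    have : t ∈ S := ⟨⟨le_trans hc0 hct.le, ht1⟩, h⟩
    exact absurd (le_csSup hSbdd this) (not_le.mpr hct)
  by_cases hcu : u (X c) < 0
  · -- c < 1
    have hc1' : c < 1 := by
      rcases lt_or_eq_of_le hc1 with h | h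
      · exact h
      · exfalso
        rw [h, hX1] at hcu
        exact absurd (F2v b hb) (not_le.mpr hcu)
    have hvc : (0 : EReal) ≤ v (X c) := F2u _ hcu
    -- v ≤ m to the right of c
    have hvm : ∀ t, c < t → t ≤ 1 → v (X t) ≤ ((m t : ℝ) : EReal) := by
      intro t hct ht1
      have ht0 : 0 ≤ t := le_trans hc0 hct.le
      rcases inf_le_iff.mp (F0 t ht0 ht1) with h | h
      · exfalso
        have := lt_of_le_of_lt h (by exact_mod_cast hmneg t ht0 ht1 : ((m t : ℝ) : EReal) < 0)
        exact absurd (F4 t hct ht1) (not_le.mpr this)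
      · exact h
    -- LSC contradiction
    have hlsc : LowerSemicontinuous (fun t => v (X t)) := hvl.comp contX
    have hmc : m c < 0 := hmneg c hc0 hc1
    obtain ⟨y, hy1, hy2⟩ := exists_between hmc
    have hy : ((y : ℝ) : EReal) < v (X c) :=
      lt_of_lt_of_le (by exact_mod_cast hy2) hvc
    have hev1 : ∀ᶠ t in 𝓝 c, ((y : ℝ) : EReal) < v (X t) := hlsc c _ hy
    have hev2 : ∀ᶠ t in 𝓝 c, m t < y :=
      (contm.tendsto c).eventually_lt_const hy1
    have hev3 : ∀ᶠ t in 𝓝[>] c, t ∈ Set.Ioo c 1 :=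
      Filter.eventually_of_mem (Ioo_mem_nhdsGT_of_mem ⟨le_refl c, hc1'⟩) (fun x hx => hx)
    have := ((hev1.and hev2).filter_mono nhdsWithin_le_nhds).and hev3
    obtain ⟨t, ⟨hvt, hmt⟩, htI⟩ := this.exists
    have : v (X t) ≤ ((m t : ℝ) : EReal) := hvm t htI.1 htI.2.le
    have hchain : ((y : ℝ) : EReal) < ((y : ℝ) : EReal) :=
      lt_of_lt_of_le hvt (le_trans this (by exact_mod_cast hmt.le))
    exact absurd hchain (lt_irrefl _)
  · -- symmetric case
    have huc : (0 : EReal) ≤ u (X c) := not_lt.mp hcu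
    have hvc : v (X c) < 0 := by
      rcases F1 c hc0 hc1 with h | h
      · exact absurd h hcu
      · exact h
    have hc0' : 0 < c := by
      rcases lt_or_eq_of_le hc0 with h | h
      · exact h
      · exfalso
        rw [← h, hX0] at hcu
        exact hcu ha
    have hum : ∀ t, 0 ≤ t → t < c → u (X t) ≤ ((m t : ℝ) : EReal) := by
      intro t ht0 htc
      have ht1 : t ≤ 1 := le_trans htc.le hc1
      rcases inf_le_iff.mp (F0 t ht0 ht1) with h | h
      · exact h
      · exfalso
        have := lt_of_le_of_lt h (by exact_mod_cast hmneg t ht0 ht1 : ((m t : ℝ) : EReal) < 0)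
        exact absurd (F2u _ (F3 t ht0 htc)) (not_le.mpr this)
    have hlsc : LowerSemicontinuous (fun t => u (X t)) := hul.comp contX
    have hmc : m c < 0 := hmneg c hc0 hc1
    obtain ⟨y, hy1, hy2⟩ := exists_between hmc
    have hy : ((y : ℝ) : EReal) < u (X c) :=
      lt_of_lt_of_le (by exact_mod_cast hy2) huc
    have hev1 : ∀ᶠ t in 𝓝 c, ((y : ℝ) : EReal) < u (X t) := hlsc c _ hy
    have hev2 : ∀ᶠ t in 𝓝 c, m t < y :=
      (contm.tendsto c).eventually_lt_const hy1
    have hev3 : ∀ᶠ t in 𝓝[<] c, t ∈ Set.Ioo 0 c :=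
      Filter.eventually_of_mem (Ioo_mem_nhdsLT_of_mem ⟨hc0', le_refl c⟩) (fun x hx => hx)
    have := ((hev1.and hev2).filter_mono nhdsWithin_le_nhds).and hev3
    obtain ⟨t, ⟨hut, hmt⟩, htI⟩ := this.exists
    have : u (X t) ≤ ((m t : ℝ) : EReal) := hum t htI.1.le htI.2
    have hchain : ((y : ℝ) : EReal) < ((y : ℝ) : EReal) :=
      lt_of_lt_of_le hut (le_trans this (by exact_mod_cast hmt.le))
    exact absurd hchain (lt_irrefl _)
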